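/- arXiv:2203.00872 — 4 statements merged into one kernel-verified Lean document; each statement's English description precedes it below -/
import Mathlib

section
/- (Decomposition theorem.) Let T : ℕ with T ≥ 1, let θ : Fin n → Fin n → ℝ be any weight function, let A : Fin T → (Fin n → Fin n → ℝ) be a family of binary matrices, let A' be a binary matrix, and let Ā = (1/T) • ∑_{t} A t be the sample centroid. Then ∑_{t : Fin T} d_θ(A t, A') = ∑_{t : Fin T} dsq_θ(A t, Ā) + T * dsq_θ(Ā, A'). -/
open Finset

/-- The weighted distance d_θ over matrices. -/
noncomputable def dTheta {n : ℕ} (θ A₁ A₂ : Fin n → Fin n → ℝ) : ℝ :=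
  (1 / 2) * ∑ i : Fin n, ∑ j : Fin n, θ i j * |A₁ i j - A₂ i j|

/-- The squared version dsq_θ of the weighted distance. -/
noncomputable def dsqTheta {n : ℕ} (θ A₁ A₂ : Fin n → Fin n → ℝ) : ℝ :=
  (1 / 2) * ∑ i : Fin n, ∑ j : Fin n, θ i j * (A₁ i j - A₂ i j) ^ 2

/-- A matrix is binary if all its entries are 0 or 1. -/
def IsBinary {n : ℕ} (A : Fin n → Fin n → ℝ) : Prop :=
  ∀ i j, A i j ∈ ({0, 1} : Set ℝ)

/-- Decomposition theorem: for binary matrices, the sum of d_θ distances to a fixed binary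
matrix A' decomposes as the variance about the sample centroid plus T times the squared
distance of the centroid to A'. -/
theorem decomposition_theorem {n : ℕ} (T : ℕ) (hT : 1 ≤ T)
    (θ : Fin n → Fin n → ℝ) (A : Fin T → Fin n → Fin n → ℝ)
    (hA : ∀ t, IsBinary (A t)) (A' : Fin n → Fin n → ℝ) (hA' : IsBinary A') :
    ∑ t : Fin T, dTheta θ (A t) A' =
      (∑ t : Fin T, dsqTheta θ (A t) ((1 / (T : ℝ)) • ∑ s : Fin T, A s)) +
        (T : ℝ) * dsqTheta θ ((1 / (T : ℝ)) • ∑ s : Fin T, A s) A' := by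
  have hT0 : (T : ℝ) ≠ 0 := Nat.cast_ne_zero.mpr (by omega)
  -- scalar lemma
  have key : ∀ (a : Fin T → ℝ) (c : ℝ),
      ∑ t : Fin T, (a t - c) ^ 2 =
        (∑ t : Fin T, (a t - (1 / (T : ℝ)) * ∑ s : Fin T, a s) ^ 2) +
          (T : ℝ) * ((1 / (T : ℝ)) * (∑ s : Fin T, a s) - c) ^ 2 := by
    intro a c
    set m : ℝ := (1 / (T : ℝ)) * ∑ s : Fin T, a s with hm
    have hs : ∑ t : Fin T, (a t - m) = 0 := by
      rw [Finset.sum_sub_distrib, Finset.sum_const, Finset.card_univ, Fintype.card_fin,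
        nsmul_eq_mul, hm]
      field_simp
      ring
    have expand : ∀ t, (a t - c) ^ 2 =
        (a t - m) ^ 2 + 2 * (m - c) * (a t - m) + (m - c) ^ 2 := by
      intro t; ring
    rw [Finset.sum_congr rfl fun t _ => expand t]
    rw [Finset.sum_add_distrib, Finset.sum_add_distrib, ← Finset.mul_sum, hs,
      Finset.sum_const, Finset.card_univ, Fintype.card_fin, nsmul_eq_mul]
    ring
  -- |x - y| = (x - y)^2 for binary x, y
  have habs : ∀ t i j, |A t i j - A' i j| = (A t i j - A' i j) ^ 2 := by
    intro t i j
    have h := hA t i j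
    have h' := hA' i j
    simp only [Set.mem_insert_iff, Set.mem_singleton_iff] at h h'
    rcases h with h | h <;> rcases h' with h' | h' <;> rw [h, h'] <;> norm_num
  have hbar : ∀ i j, ((1 / (T : ℝ)) • ∑ s : Fin T, A s) i j
      = (1 / (T : ℝ)) * ∑ s : Fin T, A s i j := by
    intro i j
    simp [Finset.sum_apply]
  have main : ∑ t : Fin T, ∑ i : Fin n, ∑ j : Fin n, θ i j * |A t i j - A' i j| =
      (∑ t : Fin T, ∑ i : Fin n, ∑ j : Fin n,
        θ i j * (A t i j - ((1 / (T : ℝ)) • ∑ s : Fin T, A s) i j) ^ 2) +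
      (T : ℝ) * ∑ i : Fin n, ∑ j : Fin n,
        θ i j * (((1 / (T : ℝ)) • ∑ s : Fin T, A s) i j - A' i j) ^ 2 := by
    rw [Finset.sum_comm, Finset.mul_sum]
    conv_rhs => rw [Finset.sum_comm]
    rw [← Finset.sum_add_distrib]
    refine Finset.sum_congr rfl fun i _ => ?_
    rw [Finset.sum_comm, Finset.mul_sum]
    conv_rhs => rw [Finset.sum_comm]
    rw [← Finset.sum_add_distrib]
    refine Finset.sum_congr rfl fun j _ => ?_
    simp only [habs, hbar]
    rw [← Finset.mul_sum, ← Finset.mul_sum, key (fun t => A t i j) (A' i j)]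
    ring
  simp only [dTheta, dsqTheta, ← Finset.mul_sum]
  rw [main]; ring
end

section
/- (Correctness of Algorithm 1.) Let T : ℕ with T ≥ 1, let θ : Fin n → Fin n → ℝ be any weight function, let A : Fin T → (Fin n → Fin n → ℝ) be a family of binary matrices, and let Ā = (1/T) • ∑_{t} A t be the sample centroid. Then for all indices s, s' : Fin T: ∑_{t : Fin T} d_θ(A s, A t) ≤ ∑_{t : Fin T} d_θ(A s', A t) if and only if dsq_θ(A s, Ā) ≤ dsq_θ(A s', Ā). In particular, a map in the sample is a sample medoid (minimizes the sum of d_θ distances to the sample) if and only if it minimizes the dsq_θ distance to the sample centroid. -/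
open Finset

lemma abs_eq_sq_of_binary {a b : ℝ} (ha : a ∈ ({0, 1} : Set ℝ))
    (hb : b ∈ ({0, 1} : Set ℝ)) : |a - b| = (a - b) ^ 2 := by
  rcases ha with rfl | rfl <;> rcases hb with rfl | rfl <;> norm_num

lemma sum_sq_eq {T : ℕ} (hT : 1 ≤ T) (a : ℝ) (v : Fin T → ℝ) :
    ∑ t : Fin T, (a - v t) ^ 2 =
      (T : ℝ) * (a - (1 / (T : ℝ)) * ∑ t, v t) ^ 2 +
        ((∑ t, (v t) ^ 2) - (T : ℝ) * ((1 / (T : ℝ)) * ∑ t, v t) ^ 2) := by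
  have hT0 : (T : ℝ) ≠ 0 := by positivity
  have : ∑ t : Fin T, (a - v t) ^ 2 =
      ∑ t : Fin T, (a ^ 2 - 2 * a * v t + (v t) ^ 2) := by
    apply Finset.sum_congr rfl; intro t _; ring
  rw [this]
  simp only [Finset.sum_add_distrib, Finset.sum_sub_distrib, Finset.sum_const,
    Finset.card_univ, Fintype.card_fin, nsmul_eq_mul, ← Finset.mul_sum]
  field_simp
  ring

/-- Correctness of Algorithm 1: comparing sums of d_θ distances to the sample is equivalent
to comparing dsq_θ distances to the sample centroid; hence a sample map is a medoid iff it
minimizes the dsq_θ distance to the centroid. -/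
theorem algorithm_one_correct {n : ℕ} (T : ℕ) (hT : 1 ≤ T)
    (θ : Fin n → Fin n → ℝ) (A : Fin T → Fin n → Fin n → ℝ)
    (hA : ∀ t, IsBinary (A t)) :
    ∀ s s' : Fin T,
      ((∑ t : Fin T, dTheta θ (A s) (A t)) ≤ ∑ t : Fin T, dTheta θ (A s') (A t)) ↔
        dsqTheta θ (A s) ((1 / (T : ℝ)) • ∑ u : Fin T, A u) ≤
          dsqTheta θ (A s') ((1 / (T : ℝ)) • ∑ u : Fin T, A u) := by
  have hT0 : (0 : ℝ) < (T : ℝ) := by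
    exact_mod_cast Nat.lt_of_lt_of_le Nat.zero_lt_one hT
  set C : ℝ := (1 / 2) * ∑ i : Fin n, ∑ j : Fin n,
      θ i j * ((∑ t : Fin T, (A t i j) ^ 2) -
        (T : ℝ) * ((1 / (T : ℝ)) * ∑ t : Fin T, A t i j) ^ 2) with hC
  have key : ∀ s : Fin T,
      (∑ t : Fin T, dTheta θ (A s) (A t)) =
        (T : ℝ) * dsqTheta θ (A s) ((1 / (T : ℝ)) • ∑ u : Fin T, A u) + C := by
    intro s
    have h1 : ∀ t, dTheta θ (A s) (A t) = dsqTheta θ (A s) (A t) := by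
      intro t
      unfold dTheta dsqTheta
      congr 1
      apply Finset.sum_congr rfl; intro i _
      apply Finset.sum_congr rfl; intro j _
      rw [abs_eq_sq_of_binary (hA s i j) (hA t i j)]
    simp only [h1]
    unfold dsqTheta
    have hM : ∀ i j, ((1 / (T : ℝ)) • ∑ u : Fin T, A u) i j
        = (1 / (T : ℝ)) * ∑ u : Fin T, A u i j := by
      intro i j; simp [Finset.sum_apply]
    simp only [hM]
    have expand : ∑ x : Fin T, ∑ i : Fin n, ∑ j : Fin n, θ i j * (A s i j - A x i j) ^ 2
        = ∑ i : Fin n, ∑ j : Fin n,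
            ((T : ℝ) * (θ i j * (A s i j - (1 / (T : ℝ)) * ∑ u : Fin T, A u i j) ^ 2)
              + θ i j * ((∑ t : Fin T, (A t i j) ^ 2)
                  - (T : ℝ) * ((1 / (T : ℝ)) * ∑ t : Fin T, A t i j) ^ 2)) := by
      rw [Finset.sum_comm]
      refine Finset.sum_congr rfl fun i _ => ?_
      rw [Finset.sum_comm]
      refine Finset.sum_congr rfl fun j _ => ?_
      rw [← Finset.mul_sum, sum_sq_eq hT]
      ring
    rw [← Finset.mul_sum, expand, hC]
    simp only [Finset.sum_add_distrib, ← Finset.mul_sum]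
    ring
  intro s s'
  rw [key s, key s']
  constructor
  · intro h
    have := add_le_add_right (le_of_sub_nonneg (by linarith)) C
    nlinarith [this]
  · intro h
    nlinarith [h]
end

section
/- (Sample complexity for the population centroid, entrywise.) Let n ≥ 1, ε > 0, δ ∈ (0,1), and let μ be a probability measure on the space of matrices Fin n → Fin n → ℝ such that μ-almost every matrix A is binary, symmetric (A i j = A j i), and has unit diagonal (A i i = 1). Let A_pop i j = ∫ A i j dμ(A). Let T : ℕ satisfy (T : ℝ) ≥ (1/ε^2) * Real.log (n/δ). Then under the T-fold product measure μ^{⊗T} (i.i.d. samples A₁, …, A_T), with probability at least 1 − δ the sample centroid Ā = (1/T) • ∑_t A t satisfies |Ā i j − A_pop i j| ≤ ε for all i, j : Fin n. -/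
open Finset MeasureTheory
open scoped ENNReal

lemma bern_d_pos {p : ℝ} (h0 : 0 ≤ p) (h1 : p ≤ 1) (s : ℝ) :
    0 < 1 - p + p * Real.exp s := by
  rcases eq_or_lt_of_le h1 with h | h
  · subst h; simpa using Real.exp_pos s
  · nlinarith [Real.exp_pos s]

lemma hoeffding_bernoulli {p : ℝ} (h0 : 0 ≤ p) (h1 : p ≤ 1) (s : ℝ) :
    1 - p + p * Real.exp s ≤ Real.exp (s ^ 2 / 8 + s * p) := by
  set d : ℝ → ℝ := fun s => 1 - p + p * Real.exp s with hd_def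
  have hdpos : ∀ s, 0 < d s := fun s => bern_d_pos h0 h1 s
  have hd : ∀ s, HasDerivAt d (p * Real.exp s) s := by
    intro s
    exact ((Real.hasDerivAt_exp s).const_mul p).const_add (1 - p)
  set φ : ℝ → ℝ := fun s => s / 4 + p - p * Real.exp s / d s with hφ_def
  set h : ℝ → ℝ := fun s => s ^ 2 / 8 + s * p - Real.log (d s) with hh_def
  have hh : ∀ s, HasDerivAt h (φ s) s := by
    intro s
    have h1' : HasDerivAt (fun s : ℝ => s ^ 2 / 8 + s * p) (s / 4 + p) s := by
      have := ((hasDerivAt_pow 2 s).div_const 8).add ((hasDerivAt_id s).mul_const p)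
      exact this.congr_deriv (by norm_num; ring)
    have h2' : HasDerivAt (fun s => Real.log (d s)) (p * Real.exp s / d s) s :=
      (hd s).log (hdpos s).ne'
    exact h1'.sub h2'
  have hφ : ∀ s, HasDerivAt φ
      (1 / 4 - (p * Real.exp s * d s - p * Real.exp s * (p * Real.exp s)) / d s ^ 2) s := by
    intro s
    have h1' : HasDerivAt (fun s : ℝ => s / 4 + p) (1 / 4) s := by
      simpa using ((hasDerivAt_id s).div_const 4).add_const p
    have h2' : HasDerivAt (fun s => p * Real.exp s / d s)
        ((p * Real.exp s * d s - p * Real.exp s * (p * Real.exp s)) / d s ^ 2) s :=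
      ((Real.hasDerivAt_exp s).const_mul p).div (hd s) (hdpos s).ne'
    exact h1'.sub h2'
  have hφ_nonneg : ∀ s, 0 ≤ 1 / 4 -
      (p * Real.exp s * d s - p * Real.exp s * (p * Real.exp s)) / d s ^ 2 := by
    intro s
    rw [sub_nonneg, div_le_iff₀ (pow_pos (hdpos s) 2)]
    have hes := Real.exp_pos s
    have : d s = 1 - p + p * Real.exp s := rfl
    nlinarith [sq_nonneg (1 - p - p * Real.exp s), hdpos s]
  have hφ0 : φ 0 = 0 := by
    simp only [hφ_def, hd_def, Real.exp_zero, mul_one]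
    have : 1 - p + p = 1 := by ring
    rw [this]
    ring
  have hφmono : Monotone φ :=
    monotone_of_deriv_nonneg (fun s => (hφ s).differentiableAt)
      (fun s => (hφ s).deriv ▸ hφ_nonneg s)
  have hh0 : h 0 = 0 := by
    simp only [hh_def, hd_def, Real.exp_zero, mul_one]
    norm_num [show 1 - p + p = 1 by ring]
  have hhs : ∀ s, 0 ≤ h s := by
    intro s
    rcases le_total 0 s with hs | hs
    · have := monotoneOn_of_deriv_nonneg (convex_Ici 0)
        (Continuous.continuousOn (by
          fun_prop (disch := exact fun x => (hdpos x).ne')))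
        (fun x _ => (hh x).differentiableAt.differentiableWithinAt)
        (fun x hx => by
          rw [(hh x).deriv]
          have : (0:ℝ) ≤ x := le_of_lt (by simpa using hx)
          simpa [hφ0] using hφmono this) Set.self_mem_Ici (Set.mem_Ici.2 hs) hs
      rwa [hh0] at this
    · have := antitoneOn_of_deriv_nonpos (convex_Iic 0)
        (Continuous.continuousOn (by
          fun_prop (disch := exact fun x => (hdpos x).ne')))
        (fun x _ => (hh x).differentiableAt.differentiableWithinAt)
        (fun x hx => by
          rw [(hh x).deriv]
          have hx0 : x ≤ (0:ℝ) := le_of_lt (by simpa using hx)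
          simpa [hφ0] using hφmono hx0) (Set.mem_Iic.2 hs) Set.self_mem_Iic hs
      rwa [hh0] at this
  have hlog : Real.log (d s) ≤ s ^ 2 / 8 + s * p := by
    have := hhs s
    simp only [hh_def] at this
    linarith
  calc d s = Real.exp (Real.log (d s)) := (Real.exp_log (hdpos s)).symm
    _ ≤ Real.exp (s ^ 2 / 8 + s * p) := Real.exp_le_exp.2 hlog

lemma tail_upper {Ω : Type*} [MeasurableSpace Ω] (μ : Measure Ω) [IsProbabilityMeasure μ]
    (T : ℕ) (X : Ω → ℝ) (hX : Measurable X) (hb : ∀ᵐ ω ∂μ, X ω = 0 ∨ X ω = 1)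
    (ε : ℝ) (hε : 0 < ε) :
    Measure.pi (fun _ : Fin T => μ)
      {A : Fin T → Ω | (T : ℝ) * ((∫ x, X x ∂μ) + ε) ≤ ∑ t : Fin T, X (A t)}
      ≤ ENNReal.ofReal (Real.exp (-2 * T * ε ^ 2)) := by
  letI : MeasureSpace Ω := ⟨μ⟩
  haveI : IsProbabilityMeasure (volume : Measure Ω) := ‹_›
  haveI : IsProbabilityMeasure (volume : Measure (Fin T → Ω)) :=
    inferInstanceAs (IsProbabilityMeasure (Measure.pi fun _ : Fin T => μ))
  set p : ℝ := ∫ x, X x ∂μ with hp_def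
  have hXint : Integrable X μ := by
    refine (integrable_const (1 : ℝ)).mono' hX.aestronglyMeasurable ?_
    filter_upwards [hb] with ω hω
    rcases hω with h | h <;> simp [h]
  have hp0 : 0 ≤ p := by
    refine integral_nonneg_of_ae ?_
    filter_upwards [hb] with ω hω
    rcases hω with h | h <;> simp [h]
  have hp1 : p ≤ 1 := by
    have : p ≤ ∫ _ω, (1 : ℝ) ∂μ := by
      refine integral_mono_ae hXint (integrable_const 1) ?_
      filter_upwards [hb] with ω hω
      rcases hω with h | h <;> simp [h]
    simpa using this
  set s : ℝ := 4 * ε with hs_def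
  have hexp_bound : ∀ᵐ ω ∂μ, ‖Real.exp (s * X ω)‖ ≤ max 1 (Real.exp s) := by
    filter_upwards [hb] with ω hω
    rcases hω with h | h <;> simp [h, Real.abs_exp, le_max_iff, le_refl]
  have hexpint : Integrable (fun ω => Real.exp (s * X ω)) μ :=
    (integrable_const (max 1 (Real.exp s))).mono'
      (Real.measurable_exp.comp (hX.const_mul s)).aestronglyMeasurable hexp_bound
  have hmgfX : ∫ ω, Real.exp (s * X ω) ∂μ = 1 - p + p * Real.exp s := by
    have hcongr : (fun ω => Real.exp (s * X ω)) =ᵐ[μ]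
        fun ω => 1 - X ω + X ω * Real.exp s := by
      filter_upwards [hb] with ω hω
      rcases hω with h | h <;> simp [h]
    have h1 : Integrable (fun a : Ω => 1 - X a) μ := (integrable_const 1).sub hXint
    have h2 : Integrable (fun a : Ω => X a * Real.exp s) μ := hXint.mul_const _
    have h3 : Integrable (fun _a : Ω => (1 : ℝ)) μ := integrable_const 1
    rw [integral_congr_ae hcongr, integral_add h1 h2, integral_sub h3 hXint,
      MeasureTheory.integral_mul_const, integral_const]
    simp [hp_def]
  -- integrability of exp (s * sum)
  have hprod_eq : (fun A : Fin T → Ω => Real.exp (s * ∑ t : Fin T, X (A t)))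
      = fun A => ∏ t : Fin T, Real.exp (s * X (A t)) := by
    funext A
    rw [Finset.mul_sum, Real.exp_sum]
  have hYint : Integrable (fun A : Fin T → Ω => Real.exp (s * ∑ t : Fin T, X (A t))) volume := by
    rw [hprod_eq]
    exact Integrable.fintype_prod (f := fun _ : Fin T => fun ω => Real.exp (s * X ω))
      (fun _ => hexpint)
  have key := ProbabilityTheory.measure_ge_le_exp_mul_mgf
    (μ := (volume : Measure (Fin T → Ω))) (X := fun A => ∑ t : Fin T, X (A t))
    ((T : ℝ) * (p + ε)) (by positivity) hYint
  have hmgf : ProbabilityTheory.mgf (fun A : Fin T → Ω => ∑ t : Fin T, X (A t)) volume s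
      = (1 - p + p * Real.exp s) ^ T := by
    rw [ProbabilityTheory.mgf, hprod_eq]
    rw [volume_pi, integral_fintype_prod_eq_pow (fun ω => Real.exp (s * X ω))]
    rw [Fintype.card_fin]
    exact congrArg (fun x => x ^ T) hmgfX
  rw [hmgf] at key
  have hfinal : Real.exp (-s * ((T : ℝ) * (p + ε))) * (1 - p + p * Real.exp s) ^ T
      ≤ Real.exp (-2 * T * ε ^ 2) := by
    have h1 : (1 - p + p * Real.exp s) ^ T ≤ Real.exp (s ^ 2 / 8 + s * p) ^ T := by
      apply pow_le_pow_left₀ (bern_d_pos hp0 hp1 s).le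
      exact hoeffding_bernoulli hp0 hp1 s
    have h2 : Real.exp (-s * ((T : ℝ) * (p + ε))) * Real.exp (s ^ 2 / 8 + s * p) ^ T
        = Real.exp (-2 * T * ε ^ 2) := by
      rw [← Real.exp_nat_mul, ← Real.exp_add]
      congr 1
      rw [hs_def]
      ring
    calc Real.exp (-s * ((T : ℝ) * (p + ε))) * (1 - p + p * Real.exp s) ^ T
        ≤ Real.exp (-s * ((T : ℝ) * (p + ε))) * Real.exp (s ^ 2 / 8 + s * p) ^ T :=
          mul_le_mul_of_nonneg_left h1 (Real.exp_nonneg _)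
      _ = Real.exp (-2 * T * ε ^ 2) := h2
  have hne : (volume : Measure (Fin T → Ω))
      {A : Fin T → Ω | (T : ℝ) * (p + ε) ≤ ∑ t : Fin T, X (A t)} ≠ ⊤ := measure_ne_top _ _
  have := (ENNReal.le_ofReal_iff_toReal_le hne (Real.exp_nonneg _)).2 (key.trans hfinal)
  exact this

lemma card_lt_pairs (n : ℕ) :
    2 * (Finset.univ.filter (fun q : Fin n × Fin n => q.1 < q.2)).card ≤ n ^ 2 := by
  set s := Finset.univ.filter (fun q : Fin n × Fin n => q.1 < q.2) with hs
  set t := Finset.univ.filter (fun q : Fin n × Fin n => q.2 < q.1) with ht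
  have hcard : s.card = t.card := by
    refine Finset.card_bij' (fun q _ => q.swap) (fun q _ => q.swap) ?_ ?_ ?_ ?_
    · intro a ha; simp only [hs, ht, Finset.mem_filter, Finset.mem_univ, true_and] at ha ⊢
      exact ha
    · intro a ha; simp only [hs, ht, Finset.mem_filter, Finset.mem_univ, true_and] at ha ⊢
      exact ha
    · intro a _; simp
    · intro a _; simp
  have hdisj : Disjoint s t := by
    rw [Finset.disjoint_left]
    intro q hq hq'
    simp only [hs, ht, Finset.mem_filter, Finset.mem_univ, true_and] at hq hq'
    exact absurd hq' (not_lt.2 hq.le)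
  have hle : s.card + t.card ≤ (Finset.univ : Finset (Fin n × Fin n)).card :=
    (Finset.card_union_of_disjoint hdisj) ▸ Finset.card_le_card (Finset.subset_univ _)
  simp only [Finset.card_univ, Fintype.card_prod, Fintype.card_fin] at hle
  have hnn : n ^ 2 = n * n := by ring
  omega

/-- Sample complexity for the population centroid, entrywise: with
`T ≥ (1/ε²) log(n/δ)` i.i.d. samples, with probability at least 1 - δ every entry of the
sample centroid is within ε of the corresponding entry of the population centroid. -/
theorem centroid_sample_complexity_entrywise (n : ℕ) (hn : 1 ≤ n)
    (ε δ : ℝ) (hε : 0 < ε) (hδ : δ ∈ Set.Ioo (0 : ℝ) 1)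
    (μ : Measure (Fin n → Fin n → ℝ)) [IsProbabilityMeasure μ]
    (hμ : ∀ᵐ A ∂μ, (∀ i j, A i j ∈ ({0, 1} : Set ℝ)) ∧
      (∀ i j, A i j = A j i) ∧ (∀ i, A i i = 1))
    (T : ℕ) (hT : (1 / ε ^ 2) * Real.log ((n : ℝ) / δ) ≤ (T : ℝ)) :
    ENNReal.ofReal (1 - δ) ≤
      Measure.pi (fun _ : Fin T => μ)
        {A : Fin T → Fin n → Fin n → ℝ |
          ∀ i j : Fin n,
            |((1 / (T : ℝ)) • ∑ t : Fin T, A t) i j - ∫ B, B i j ∂μ| ≤ ε} := by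
  obtain ⟨hδ0, hδ1⟩ := hδ
  have hn0 : (0 : ℝ) < n := by exact_mod_cast hn
  have hlogpos : 0 < Real.log ((n : ℝ) / δ) := by
    apply Real.log_pos
    rw [lt_div_iff₀ hδ0, one_mul]
    exact hδ1.trans_le (by exact_mod_cast hn)
  have hTpos : (0 : ℝ) < T := lt_of_lt_of_le (by positivity) hT
  have hT0 : (T : ℝ) ≠ 0 := hTpos.ne'
  set P := Measure.pi (fun _ : Fin T => μ) with hP
  haveI : IsProbabilityMeasure P := by
    rw [hP]; infer_instance
  -- the exponential bound
  have hexp : Real.exp (-2 * T * ε ^ 2) ≤ (δ / n) ^ 2 := by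
    have h1 : Real.log ((n : ℝ) / δ) ≤ T * ε ^ 2 := by
      have h := mul_le_mul_of_nonneg_right hT (sq_nonneg ε)
      calc Real.log ((n : ℝ) / δ) = 1 / ε ^ 2 * Real.log ((n : ℝ) / δ) * ε ^ 2 := by
            field_simp
        _ ≤ (T : ℝ) * ε ^ 2 := h
    have h2 : Real.exp (-2 * T * ε ^ 2) ≤ Real.exp (-2 * Real.log ((n : ℝ) / δ)) := by
      apply Real.exp_le_exp.2
      nlinarith
    refine h2.trans_eq ?_
    have hx : (0 : ℝ) < (n : ℝ) / δ := by positivity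
    rw [show (-2 : ℝ) * Real.log ((n : ℝ) / δ) = Real.log (((n : ℝ) / δ)⁻¹ ^ 2) by
      rw [Real.log_pow, Real.log_inv]; push_cast; ring]
    rw [Real.exp_log (by positivity), inv_div]
  -- measurability / binary facts per entry
  have hmeas : ∀ i j : Fin n, Measurable (fun B : Fin n → Fin n → ℝ => B i j) :=
    fun i j => (measurable_pi_apply j).comp (measurable_pi_apply i)
  have hbin : ∀ i j : Fin n, ∀ᵐ B ∂μ, B i j = 0 ∨ B i j = 1 := by
    intro i j
    filter_upwards [hμ] with B hB
    simpa [Set.mem_insert_iff] using hB.1 i j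
  have hbin' : ∀ i j : Fin n, ∀ᵐ B ∂μ, 1 - B i j = 0 ∨ 1 - B i j = 1 := by
    intro i j
    filter_upwards [hbin i j] with B hB
    rcases hB with h | h <;> simp [h]
  have hXint : ∀ i j : Fin n, Integrable (fun B : Fin n → Fin n → ℝ => B i j) μ := by
    intro i j
    refine (integrable_const (1 : ℝ)).mono' (hmeas i j).aestronglyMeasurable ?_
    filter_upwards [hbin i j] with B hB
    rcases hB with h | h <;> simp [h]
  have hint1 : ∀ i j : Fin n, (∫ B, (1 - B i j) ∂μ) = 1 - ∫ B, B i j ∂μ := by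
    intro i j
    rw [integral_sub (integrable_const 1) (hXint i j), integral_const]
    simp
  -- bad events
  set E1 : Fin n × Fin n → Set (Fin T → Fin n → Fin n → ℝ) := fun q =>
    {A | (T : ℝ) * ((∫ B, B q.1 q.2 ∂μ) + ε) ≤ ∑ t : Fin T, A t q.1 q.2} with hE1
  set E2 : Fin n × Fin n → Set (Fin T → Fin n → Fin n → ℝ) := fun q =>
    {A | (T : ℝ) * ((∫ B, (1 - B q.1 q.2) ∂μ) + ε) ≤ ∑ t : Fin T, (1 - A t q.1 q.2)} with hE2
  have hE1bound : ∀ q, P (E1 q) ≤ ENNReal.ofReal (Real.exp (-2 * T * ε ^ 2)) := by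
    intro q
    exact tail_upper μ T (fun B => B q.1 q.2) (hmeas q.1 q.2) (hbin q.1 q.2) ε hε
  have hE2bound : ∀ q, P (E2 q) ≤ ENNReal.ofReal (Real.exp (-2 * T * ε ^ 2)) := by
    intro q
    exact tail_upper μ T (fun B => 1 - B q.1 q.2)
      ((measurable_const).sub (hmeas q.1 q.2)) (hbin' q.1 q.2) ε hε
  -- almost-everywhere niceness
  have hN : ∀ᵐ A ∂P, ∀ t : Fin T, (∀ i j, A t i j ∈ ({0, 1} : Set ℝ)) ∧
      (∀ i j, A t i j = A t j i) ∧ (∀ i, A t i i = 1) := by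
    rw [MeasureTheory.ae_all_iff]
    intro t
    exact ((MeasureTheory.Measure.tendsto_eval_ae_ae (μ := fun _ : Fin T => μ) (i := t)).eventually hμ)
  set G := {A : Fin T → Fin n → Fin n → ℝ |
      ∀ i j : Fin n,
        |((1 / (T : ℝ)) • ∑ t : Fin T, A t) i j - ∫ B, B i j ∂μ| ≤ ε} with hG
  set sF := Finset.univ.filter (fun q : Fin n × Fin n => q.1 < q.2) with hsF
  -- symmetric integrals
  have hintsymm : ∀ i j : Fin n, (∫ B, B i j ∂μ) = ∫ B, B j i ∂μ := by
    intro i j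
    apply integral_congr_ae
    filter_upwards [hμ] with B hB
    exact hB.2.1 i j
  have hintdiag : ∀ i : Fin n, (∫ B, B i i ∂μ) = 1 := by
    intro i
    rw [show (∫ B, B i i ∂μ) = ∫ _B, (1:ℝ) ∂μ from integral_congr_ae (by
      filter_upwards [hμ] with B hB; exact hB.2.2 i)]
    simp
  -- core inclusion
  have hsub : ∀ᵐ A ∂P, A ∈ G ∪ ⋃ q ∈ sF, (E1 q ∪ E2 q) := by
    filter_upwards [hN] with A hA
    by_cases hAG : A ∈ G
    · exact Set.mem_union_left _ hAG
    right
    simp only [hG, Set.mem_setOf_eq, not_forall, not_le] at hAG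
    obtain ⟨i, j, hij⟩ := hAG
    -- centroid entry formula
    have hc : ∀ a b : Fin n, ((1 / (T : ℝ)) • ∑ t : Fin T, A t) a b
        = (1 / (T : ℝ)) * ∑ t : Fin T, A t a b := by
      intro a b
      simp [Finset.sum_apply]
    have hne : i ≠ j := by
      intro h
      subst h
      rw [hc i i] at hij
      have : ∑ t : Fin T, A t i i = (T : ℝ) := by
        rw [Finset.sum_congr rfl (fun t _ => (hA t).2.2 i)]
        simp
      rw [this, hintdiag i] at hij
      have : (1 / (T : ℝ)) * (T : ℝ) = 1 := by field_simp
      rw [this] at hij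
      simp at hij
      linarith
    -- reduce to ordered pair
    have main : ∀ a b : Fin n, ε < |((1 / (T : ℝ)) • ∑ t : Fin T, A t) a b - ∫ B, B a b ∂μ| →
        A ∈ E1 (a, b) ∪ E2 (a, b) := by
      intro a b hab
      rw [hc a b] at hab
      set S := ∑ t : Fin T, A t a b with hS
      set pab := ∫ B, B a b ∂μ with hpab
      have hSeq : S = (T : ℝ) * ((1 / (T : ℝ)) * S) := by field_simp
      rcases lt_or_ge ((1 / (T : ℝ)) * S) pab with hlt | hge
      · right
        show (T : ℝ) * ((∫ B, (1 - B a b) ∂μ) + ε) ≤ ∑ t : Fin T, (1 - A t a b)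
        rw [hint1 a b]
        have habs : ε < pab - (1 / (T : ℝ)) * S := by
          rw [abs_of_neg (by linarith)] at hab; linarith
        have hsum : ∑ t : Fin T, (1 - A t a b) = (T : ℝ) - S := by
          rw [Finset.sum_sub_distrib]
          simp [hS]
        rw [hsum]
        nlinarith [hTpos]
      · left
        show (T : ℝ) * (pab + ε) ≤ S
        have habs : ε < (1 / (T : ℝ)) * S - pab := by
          rw [abs_of_nonneg (by linarith)] at hab; linarith
        nlinarith [hTpos]
    rcases hne.lt_or_gt with hlt | hlt
    · exact Set.mem_biUnion (Finset.mem_coe.2 (Finset.mem_filter.2 ⟨Finset.mem_univ _, hlt⟩)) (main i j hij)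
    · have hcs : ∑ t : Fin T, A t j i = ∑ t : Fin T, A t i j :=
        Finset.sum_congr rfl fun t _ => (hA t).2.1 j i
      have hij' : ε < |((1 / (T : ℝ)) • ∑ t : Fin T, A t) j i - ∫ B, B j i ∂μ| := by
        rw [hc j i, hcs, ← hintsymm i j, ← hc i j]
        exact hij
      exact Set.mem_biUnion (Finset.mem_coe.2 (Finset.mem_filter.2 ⟨Finset.mem_univ _, hlt⟩)) (main j i hij')
  -- put everything together
  set b : ℝ≥0∞ := ENNReal.ofReal (Real.exp (-2 * T * ε ^ 2)) with hb
  have hstep1 : (1 : ℝ≥0∞) ≤ P G + P (⋃ q ∈ sF, (E1 q ∪ E2 q)) := by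
    have h0 : (1 : ℝ≥0∞) = P Set.univ := measure_univ.symm
    have h1 : P Set.univ ≤ P (G ∪ ⋃ q ∈ sF, (E1 q ∪ E2 q)) := by
      apply measure_mono_ae
      filter_upwards [hsub] with A hA
      exact fun _ => hA
    exact h0.le.trans (h1.trans (measure_union_le _ _))
  have hstep2 : P (⋃ q ∈ sF, (E1 q ∪ E2 q)) ≤ ENNReal.ofReal δ := by
    refine le_trans (measure_biUnion_finset_le _ _) ?_
    have hsum : ∑ q ∈ sF, P (E1 q ∪ E2 q) ≤ ∑ _q ∈ sF, (b + b) := by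
      apply Finset.sum_le_sum
      intro q _
      exact le_trans (measure_union_le _ _) (add_le_add (hE1bound q) (hE2bound q))
    refine hsum.trans ?_
    rw [Finset.sum_const, nsmul_eq_mul, hb, ← ENNReal.ofReal_add (Real.exp_nonneg _)
      (Real.exp_nonneg _), ← ENNReal.ofReal_natCast,
      ← ENNReal.ofReal_mul (Nat.cast_nonneg _)]
    apply ENNReal.ofReal_le_ofReal
    have hc2 : (sF.card : ℝ) * 2 ≤ (n : ℝ) ^ 2 := by
      have := card_lt_pairs n
      rw [hsF]
      rw [mul_comm]
      exact_mod_cast this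
    have hexp0 : 0 ≤ Real.exp (-2 * T * ε ^ 2) := Real.exp_nonneg _
    have heq : (n : ℝ) ^ 2 * (δ / n) ^ 2 = δ ^ 2 := by
      field_simp
    nlinarith [hexp, sq_nonneg ((n:ℝ) - 1), Real.exp_nonneg (-2 * (T:ℝ) * ε ^ 2),
      mul_le_mul_of_nonneg_left hexp (mul_nonneg (Nat.cast_nonneg sF.card) zero_le_two)]
  have hfin : (1 : ℝ≥0∞) ≤ P G + ENNReal.ofReal δ :=
    hstep1.trans (add_le_add_right hstep2 _)
  rw [show ENNReal.ofReal (1 - δ) = 1 - ENNReal.ofReal δ by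
    rw [ENNReal.ofReal_sub _ hδ0.le, ENNReal.ofReal_one]]
  exact tsub_le_iff_right.2 hfin
end

section
/- (Population decomposition of the medoid cost.) Let θ : Fin n → Fin n → ℝ be any weight function, let 𝓜 : Finset (Fin n → Fin n → ℝ) be a finite set of binary matrices, let p : (Fin n → Fin n → ℝ) → ℝ satisfy p M ≥ 0 for all M ∈ 𝓜 and ∑_{M ∈ 𝓜} p M = 1, and let A_pop = ∑_{M ∈ 𝓜} p M • M. Then for every binary matrix A', ∑_{M ∈ 𝓜} p M * d_θ(M, A') = ∑_{M ∈ 𝓜} p M * dsq_θ(M, A_pop) + dsq_θ(A_pop, A'). In particular the population medoid cost of A' is, up to an additive constant independent of A', equal to dsq_θ(A_pop, A'). -/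
open Finset

lemma key_scalar {α : Type*} (S : Finset α) (p : α → ℝ) (x : α → ℝ)
    (hsum : ∑ a ∈ S, p a = 1) (hbin : ∀ a ∈ S, x a = 0 ∨ x a = 1)
    (y : ℝ) (hy : y = 0 ∨ y = 1) :
    ∑ a ∈ S, p a * |x a - y| =
      (∑ a ∈ S, p a * (x a - (∑ b ∈ S, p b * x b)) ^ 2) +
        ((∑ b ∈ S, p b * x b) - y) ^ 2 := by
  set m := ∑ b ∈ S, p b * x b with hm
  have h1 : ∀ a ∈ S, p a * |x a - y| = p a * (x a - y) ^ 2 := by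
    intro a ha
    rcases hbin a ha with h | h <;> rcases hy with h' | h' <;>
      simp [h, h'] <;> norm_num
  rw [Finset.sum_congr rfl h1]
  have expand : ∀ a, p a * (x a - y) ^ 2 =
      p a * (x a - m) ^ 2 + (2 * (m - y)) * (p a * (x a - m)) + (m - y) ^ 2 * p a := by
    intro a; ring
  simp_rw [expand]
  rw [Finset.sum_add_distrib, Finset.sum_add_distrib, ← Finset.mul_sum, ← Finset.mul_sum]
  have h0 : ∑ a ∈ S, p a * (x a - m) = 0 := by
    simp_rw [mul_sub]
    rw [Finset.sum_sub_distrib, ← Finset.sum_mul, hsum]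
    simp [hm]
  rw [h0, hsum]
  ring

lemma swap_half {α : Type*} {n : ℕ} (S : Finset α) (p : α → ℝ)
    (f : α → Fin n → Fin n → ℝ) :
    ∑ a ∈ S, p a * ((1 / 2 : ℝ) * ∑ i : Fin n, ∑ j : Fin n, f a i j) =
      (1 / 2 : ℝ) * ∑ i : Fin n, ∑ j : Fin n, ∑ a ∈ S, p a * f a i j := by
  have step : ∀ a, p a * ((1 / 2 : ℝ) * ∑ i : Fin n, ∑ j : Fin n, f a i j) =
      (1 / 2 : ℝ) * ∑ i : Fin n, ∑ j : Fin n, p a * f a i j := by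
    intro a
    simp_rw [← Finset.mul_sum]
    ring
  rw [Finset.sum_congr rfl fun a _ => step a, ← Finset.mul_sum]
  congr 1
  rw [Finset.sum_comm]
  apply Finset.sum_congr rfl
  intro i _
  rw [Finset.sum_comm]

/-- Population decomposition of the medoid cost: the expected d_θ distance from a binary
matrix A' decomposes through the population centroid `A_pop = ∑ p M • M`. -/
theorem population_medoid_decomposition {n : ℕ} (θ : Fin n → Fin n → ℝ)
    (𝓜 : Finset (Fin n → Fin n → ℝ)) (hbin : ∀ M ∈ 𝓜, IsBinary M)
    (p : (Fin n → Fin n → ℝ) → ℝ) (hp : ∀ M ∈ 𝓜, 0 ≤ p M)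
    (hsum : ∑ M ∈ 𝓜, p M = 1) (A' : Fin n → Fin n → ℝ) (hA' : IsBinary A') :
    ∑ M ∈ 𝓜, p M * dTheta θ M A' =
      (∑ M ∈ 𝓜, p M * dsqTheta θ M (∑ M ∈ 𝓜, p M • M)) +
        dsqTheta θ (∑ M ∈ 𝓜, p M • M) A' := by
  classical
  have hApp : ∀ i j, (∑ M ∈ 𝓜, p M • M) i j = ∑ M ∈ 𝓜, p M * M i j := by
    intro i j
    simp [Finset.sum_apply]
  have main : ∀ i j : Fin n,
      ∑ M ∈ 𝓜, p M * (θ i j * |M i j - A' i j|) =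
        (∑ M ∈ 𝓜, p M * (θ i j * (M i j - (∑ N ∈ 𝓜, p N • N) i j) ^ 2)) +
          θ i j * ((∑ N ∈ 𝓜, p N • N) i j - A' i j) ^ 2 := by
    intro i j
    have hb : ∀ M ∈ 𝓜, M i j = 0 ∨ M i j = 1 := by
      intro M hM
      simpa [Set.mem_insert_iff] using hbin M hM i j
    have hy : A' i j = 0 ∨ A' i j = 1 := by
      simpa [Set.mem_insert_iff] using hA' i j
    have hk := key_scalar 𝓜 p (fun M => M i j) hsum hb (A' i j) hy
    simp only [hApp]
    calc ∑ M ∈ 𝓜, p M * (θ i j * |M i j - A' i j|)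
        = θ i j * ∑ M ∈ 𝓜, p M * |M i j - A' i j| := by
          rw [Finset.mul_sum]; exact Finset.sum_congr rfl fun M _ => by ring
      _ = θ i j * ((∑ M ∈ 𝓜, p M * ((fun M => M i j) M - (∑ N ∈ 𝓜, p N * N i j)) ^ 2) +
            ((∑ N ∈ 𝓜, p N * N i j) - A' i j) ^ 2) := by rw [hk]
      _ = (∑ M ∈ 𝓜, p M * (θ i j * (M i j - (∑ N ∈ 𝓜, p N * N i j)) ^ 2)) +
            θ i j * ((∑ N ∈ 𝓜, p N * N i j) - A' i j) ^ 2 := by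
          rw [mul_add, Finset.mul_sum]
          congr 1
          exact Finset.sum_congr rfl fun M _ => by ring
  simp only [dTheta, dsqTheta]
  rw [swap_half 𝓜 p (fun M i j => θ i j * |M i j - A' i j|),
    swap_half 𝓜 p (fun M i j => θ i j * (M i j - (∑ N ∈ 𝓜, p N • N) i j) ^ 2),
    ← mul_add, ← Finset.sum_add_distrib]
  congr 1
  apply Finset.sum_congr rfl
  intro i _
  rw [← Finset.sum_add_distrib]
  exact Finset.sum_congr rfl fun j _ => main i j
end
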